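/- Let x ∈ X and, for each α ∈ (0,1), let P(x,α) ∈ H denote the global minimum point of g_{α,x}. Then ‖P(x,α)‖_H → 0 as α → 0⁺. -/
import Mathlib

/-- A convex lower semicontinuous function on a Banach space has a continuous affine
minorant. -/
theorem exists_affine_minorant {X : Type*} [NormedAddCommGroup X] [NormedSpace ℝ X]
    (f : X → ℝ) (hconv : ConvexOn ℝ Set.univ f) (hlsc : LowerSemicontinuous f) :
    ∃ (ψ : X →L[ℝ] ℝ) (c : ℝ), ∀ y, c + ψ y ≤ f y := by
  set S : Set (X × ℝ) := {p | f p.1 ≤ p.2} with hS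
  have hSconv : Convex ℝ S := by
    have := hconv.convex_epigraph
    simpa [hS] using this
  have hSclosed : IsClosed S := by
    rw [← isOpen_compl_iff, isOpen_iff_mem_nhds]
    rintro ⟨y, t⟩ ht
    simp only [hS, Set.mem_compl_iff, Set.mem_setOf_eq, not_le] at ht
    obtain ⟨r, hr1, hr2⟩ := exists_between ht
    have hU : ∀ᶠ z in nhds y, r < f z := hlsc y r hr2
    have hV : Set.Iio r ∈ nhds t := Iio_mem_nhds hr1
    rw [nhds_prod_eq]
    filter_upwards [Filter.prod_mem_prod hU hV] with z hz
    simp only [hS, Set.mem_compl_iff, Set.mem_setOf_eq, not_le]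
    exact lt_trans hz.2 hz.1
  have hx : ((0 : X), f 0 - 1) ∉ S := by
    simp only [hS, Set.mem_setOf_eq]
    linarith
  obtain ⟨φ, u, h1, h2⟩ := geometric_hahn_banach_point_closed hSconv hSclosed hx
  set c : ℝ := φ (0, 1) with hc_def
  have hsplit : ∀ (y : X) (t : ℝ), φ (y, t) = φ (y, 0) + t * c := by
    intro y t
    have : (y, t) = (y, (0 : ℝ)) + t • ((0 : X), (1 : ℝ)) := by
      simp [Prod.ext_iff]
    rw [this, map_add, map_smul]
    simp [hc_def, smul_eq_mul]
  have hc : 0 < c := by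
    have h3 := h2 (0, f 0) (by simp [hS])
    have e1 := hsplit 0 (f 0)
    have e2 := hsplit 0 (f 0 - 1)
    rw [e1] at h3
    rw [e2] at h1
    nlinarith
  refine ⟨(-(1 / c)) • (φ.comp (ContinuousLinearMap.inl ℝ X ℝ)), u / c, fun y => ?_⟩
  have h3 := h2 (y, f y) (by simp [hS])
  rw [hsplit y (f y)] at h3
  have hφ : (φ.comp (ContinuousLinearMap.inl ℝ X ℝ)) y = φ (y, 0) := rfl
  have hdiv : (u - φ (y, 0)) / c ≤ f y := by
    rw [div_le_iff₀ hc]; linarith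
  have : u / c + (-(1 / c)) * φ (y, 0) = (u - φ (y, 0)) / c := by ring
  simp only [ContinuousLinearMap.smul_apply, hφ, smul_eq_mul]
  linarith [hdiv, this.symm.le]

/-- The minimizers `P(x,α)` of `g_{α,x}` satisfy `‖P(x,α)‖_H → 0` as `α → 0⁺`. -/
theorem minimizer_norm_tendsto_zero {X H : Type*} [NormedAddCommGroup X]
    [NormedSpace ℝ X] [CompleteSpace X] [NormedAddCommGroup H]
    [InnerProductSpace ℝ H] [CompleteSpace H]
    (j : H →L[ℝ] X) (hj : Function.Injective j)
    (f : X → ℝ) (hconv : ConvexOn ℝ Set.univ f) (hlsc : LowerSemicontinuous f)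
    (x : X) (P : ℝ → H)
    (hP : ∀ α ∈ Set.Ioo (0 : ℝ) 1, ∀ h : H,
      f (x + j (P α)) + ‖P α‖ ^ 2 / (2 * α) ≤ f (x + j h) + ‖h‖ ^ 2 / (2 * α)) :
    Filter.Tendsto (fun α : ℝ => ‖P α‖) (nhdsWithin 0 (Set.Ioi 0)) (nhds 0) := by
  obtain ⟨ψ, c, hmin⟩ := exists_affine_minorant f hconv hlsc
  set M : ℝ := ‖ψ.comp j‖ with hM
  have hM0 : 0 ≤ M := norm_nonneg _
  set C : ℝ := f x - c - ψ x with hC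
  have hC0 : 0 ≤ C := by have := hmin x; simp [hC]; linarith
  -- key pointwise bound
  have key : ∀ α ∈ Set.Ioo (0 : ℝ) 1,
      ‖P α‖ ≤ α * M + Real.sqrt (α ^ 2 * M ^ 2 + 2 * α * C) := by
    intro α hα
    obtain ⟨hα0, hα1⟩ := hα
    have h0 := hP α ⟨hα0, hα1⟩ 0
    simp only [map_zero, add_zero, norm_zero] at h0
    rw [zero_pow (by norm_num), zero_div] at h0
    -- h0 : f (x + j (P α)) + ‖P α‖ ^ 2 / (2 * α) ≤ f x + 0
    have h1 : c + ψ (x + j (P α)) ≤ f (x + j (P α)) := hmin _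
    have h2 : ψ (x + j (P α)) = ψ x + (ψ.comp j) (P α) := by
      rw [map_add]; rfl
    have h3 : -(M * ‖P α‖) ≤ (ψ.comp j) (P α) :=
      neg_le_of_abs_le (by rw [← Real.norm_eq_abs]; exact (ψ.comp j).le_opNorm _)
    have h4 : ‖P α‖ ^ 2 / (2 * α) ≤ C + M * ‖P α‖ := by
      rw [h2] at h1
      simp only [hC]
      linarith
    have h5 : ‖P α‖ ^ 2 ≤ 2 * α * C + 2 * α * M * ‖P α‖ := by
      have h2α : 0 < 2 * α := by linarith
      rw [div_le_iff₀ h2α] at h4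
      nlinarith
    have h6 : (‖P α‖ - α * M) ^ 2 ≤ α ^ 2 * M ^ 2 + 2 * α * C := by nlinarith
    have h7 : ‖P α‖ - α * M ≤ Real.sqrt (α ^ 2 * M ^ 2 + 2 * α * C) := by
      calc ‖P α‖ - α * M ≤ |‖P α‖ - α * M| := le_abs_self _
        _ = Real.sqrt ((‖P α‖ - α * M) ^ 2) := (Real.sqrt_sq_eq_abs _).symm
        _ ≤ Real.sqrt (α ^ 2 * M ^ 2 + 2 * α * C) := Real.sqrt_le_sqrt h6
    linarith
  -- the bound tends to zero
  have hcont : Continuous fun α : ℝ => α * M + Real.sqrt (α ^ 2 * M ^ 2 + 2 * α * C) := by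
    fun_prop
  have hb : Filter.Tendsto (fun α : ℝ => α * M + Real.sqrt (α ^ 2 * M ^ 2 + 2 * α * C))
      (nhdsWithin 0 (Set.Ioi 0)) (nhds 0) := by
    have := (hcont.tendsto 0).mono_left (nhdsWithin_le_nhds (s := Set.Ioi (0:ℝ)))
    simpa using this
  refine squeeze_zero' ?_ ?_ hb
  · exact Filter.Eventually.of_forall fun α => norm_nonneg _
  · filter_upwards [Ioo_mem_nhdsGT_of_mem (by norm_num : (0 : ℝ) ∈ Set.Ico (0 : ℝ) 1)]
      with α hα using key α hα
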